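/- Let G be a group, H a subgroup of G of index 2, A a commutative group, ψ : H →* A a group homomorphism, and x ∈ G with x ∉ H. Then the transfer homomorphism Ver : G →* A associated to ψ satisfies Ver(x) = ψ(x²) (note x² ∈ H since H has index 2). -/

import Mathlib

/-- Index-2 transfer formula off `H`: for `H ≤ G` of index 2, `ψ : H →* A` with `A`
commutative, and `x ∉ H`, the transfer satisfies `Ver(x) = ψ(x²)`. -/
theorem transfer_eq_of_index_two_not_mem
    {G : Type*} [Group G] {A : Type*} [CommGroup A]
    (H : Subgroup G) [H.FiniteIndex] (hidx : H.index = 2)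
    (x : G) (hx : x ∉ H) (ψ : H →* A) :
    ∀ hmem : x ^ 2 ∈ H, ψ.transfer x = ψ ⟨x ^ 2, hmem⟩ := by
  intro hmem
  classical
  letI := H.fintypeQuotientOfFiniteIndex
  -- x² acts trivially on G ⧸ H
  have hA : ∀ a : G ⧸ H, x ^ 2 • a = a := by
    intro a
    induction a using QuotientGroup.induction_on with
    | H g =>
      show ((x ^ 2 * g : G) : G ⧸ H) = (g : G ⧸ H)
      rw [QuotientGroup.eq]
      simp only [mul_inv_rev, ← mul_assoc]
      simp [Subgroup.mul_mem_iff_of_index_two hidx, H.inv_mem_iff, hmem]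
  -- x acts without fixed points on G ⧸ H
  have hB : ∀ a : G ⧸ H, x • a ≠ a := by
    intro a
    induction a using QuotientGroup.induction_on with
    | H g =>
      show ((x * g : G) : G ⧸ H) ≠ (g : G ⧸ H)
      rw [Ne, QuotientGroup.eq]
      simp only [mul_inv_rev, ← mul_assoc]
      simp [Subgroup.mul_mem_iff_of_index_two hidx, H.inv_mem_iff, hx]
  -- the orbit quotient is a subsingleton (single orbit)
  haveI hsub : Subsingleton (Quotient (MulAction.orbitRel (Subgroup.zpowers x) (G ⧸ H))) := by
    constructor
    intro q q'
    induction q using Quotient.inductionOn with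
    | h a =>
      induction q' using Quotient.inductionOn with
      | h b =>
        refine Quotient.sound' (?_ : a ∈ MulAction.orbit (Subgroup.zpowers x) b)
        -- a and b are orbit-related: either a = b or a = x • b
        have hcard : Nat.card (G ⧸ H) = 2 := by
          rw [← Subgroup.index, hidx]
        -- in G ⧸ H with 2 elements, a = b or a = x • b
        rcases eq_or_ne a b with h | h
        · rw [h]; exact MulAction.mem_orbit_self b
        · have : a = x • b := by
            have hxb : x • b ≠ b := hB b
            have h2 : Fintype.card (G ⧸ H) = 2 := by
              rw [← Nat.card_eq_fintype_card, hcard]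
            -- three distinct elements impossible
            by_contra hne
            have : Finset.card {a, b, x • b} ≤ 2 := h2 ▸ Finset.card_le_univ _
            rw [Finset.card_insert_of_notMem (by simp [h, hne]),
              Finset.card_insert_of_notMem (by simp [Ne.symm hxb])] at this
            simp at this
          exact this ▸ MulAction.mem_orbit b (⟨x, Subgroup.mem_zpowers x⟩ : Subgroup.zpowers x)
  haveI : Unique (Quotient (MulAction.orbitRel (Subgroup.zpowers x) (G ⧸ H))) :=
    uniqueOfSubsingleton (Quotient.mk _ ((1 : G) : G ⧸ H))
  rw [MonoidHom.transfer_eq_prod_quotient_orbitRel_zpowers_quot, Fintype.prod_unique]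
  -- compute the minimal period: it is 2
  have hper : ∀ a : G ⧸ H, Function.minimalPeriod (x • ·) a = 2 := by
    intro a
    haveI : Fact (Nat.Prime 2) := ⟨Nat.prime_two⟩
    refine Function.minimalPeriod_eq_prime ?_ (hB a)
    show (x • ·)^[2] a = a
    simp only [Function.iterate_succ, Function.iterate_zero, Function.comp_apply, id_eq]
    rw [smul_smul, ← pow_two]
    exact hA a
  have hkey : ∀ (g₀ : G) (h : g₀⁻¹ * x ^ 2 * g₀ ∈ H),
      ψ ⟨g₀⁻¹ * x ^ 2 * g₀, h⟩ = ψ ⟨x ^ 2, hmem⟩ := by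
    intro g₀ h
    by_cases hg : g₀ ∈ H
    · have : (⟨g₀⁻¹ * x ^ 2 * g₀, h⟩ : H) = ⟨g₀, hg⟩⁻¹ * ⟨x ^ 2, hmem⟩ * ⟨g₀, hg⟩ := by
        ext; simp
      rw [this, map_mul, map_mul, map_inv, mul_comm, ← mul_assoc]
      simp
    · have hh : x⁻¹ * g₀ ∈ H := by
        rw [Subgroup.mul_mem_iff_of_index_two hidx, H.inv_mem_iff]
        tauto
      have heq : g₀⁻¹ * x ^ 2 * g₀ = (x⁻¹ * g₀)⁻¹ * x ^ 2 * (x⁻¹ * g₀) := by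
        group
      have h' : (x⁻¹ * g₀)⁻¹ * x ^ 2 * (x⁻¹ * g₀) ∈ H := heq ▸ h
      have : (⟨g₀⁻¹ * x ^ 2 * g₀, h⟩ : H)
          = ⟨x⁻¹ * g₀, hh⟩⁻¹ * ⟨x ^ 2, hmem⟩ * ⟨x⁻¹ * g₀, hh⟩ := by
        ext; simp [heq]
      rw [this, map_mul, map_mul, map_inv, mul_comm, ← mul_assoc]
      simp
  simp only [hper]
  exact hkey _ _
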